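/- arXiv:1204.4865 — 5 statements merged into one kernel-verified Lean document; each statement's English description precedes it below -/
import Mathlib

section
/- Let G be a connected oriented graph with reduced incidence matrix B ∈ ℤ^{m×n}. If α ∈ ℝ^n is such that B α ∈ ℤ^m, then α ∈ ℤ^n. -/
/-- Reduced (transposed) incidence matrix of an oriented graph on vertices `0,…,n`. -/
def incB (n m : ℕ) (src tgt : Fin m → Fin (n + 1)) : Matrix (Fin m) (Fin n) ℝ :=
  fun e i => (if src e = i.succ then 1 else 0) - (if tgt e = i.succ then 1 else 0)

/-- Connectedness of the underlying undirected graph. -/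
def GraphConnected (n m : ℕ) (src tgt : Fin m → Fin (n + 1)) : Prop :=
  ∀ a b : Fin (n + 1),
    Relation.ReflTransGen
      (fun u v => ∃ e, (src e = u ∧ tgt e = v) ∨ (src e = v ∧ tgt e = u)) a b

/-- Integrality: if `B α` is an integer vector for the reduced incidence matrix of a
connected graph, then `α` is an integer vector. -/
theorem stmt_7 (n m : ℕ) (src tgt : Fin m → Fin (n + 1))
    (hconn : GraphConnected n m src tgt)
    (α : Fin n → ℝ)
    (hint : ∀ e, ∃ z : ℤ, (incB n m src tgt).mulVec α e = z) :
    ∀ i, ∃ z : ℤ, α i = z := by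
  set f : Fin (n + 1) → ℝ := Fin.cases 0 α with hf
  have hsum : ∀ v : Fin (n + 1),
      ∑ i : Fin n, (if v = i.succ then (1 : ℝ) else 0) * α i = f v := by
    intro v
    induction v using Fin.cases with
    | zero => simp [hf, fun i : Fin n => (Fin.succ_ne_zero i).symm]
    | succ j =>
      rw [Finset.sum_eq_single j]
      · simp [hf]
      · intro b _ hb
        have : j.succ ≠ b.succ := fun h => hb (Fin.succ_injective _ h).symm
        simp [this]
      · simp
  have key : ∀ e, ∃ z : ℤ, f (src e) - f (tgt e) = z := by
    intro e
    obtain ⟨z, hz⟩ := hint e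
    refine ⟨z, ?_⟩
    rw [← hz]
    simp only [incB, Matrix.mulVec, dotProduct]
    rw [← hsum (src e), ← hsum (tgt e), ← Finset.sum_sub_distrib]
    congr 1; ext i; ring
  have hv : ∀ v, ∃ z : ℤ, f v = z := by
    intro v
    induction hconn 0 v with
    | refl => exact ⟨0, by simp [hf]⟩
    | tail _ h ih =>
      obtain ⟨z, hz⟩ := ih
      obtain ⟨e, he⟩ := h
      rcases he with ⟨h1, h2⟩ | ⟨h1, h2⟩ <;> obtain ⟨w, hw⟩ := key e
      · exact ⟨z - w, by rw [h1, h2, hz] at hw; push_cast; linarith⟩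
      · exact ⟨z + w, by rw [h1, h2, hz] at hw; push_cast; linarith⟩
  intro i
  obtain ⟨z, hz⟩ := hv i.succ
  exact ⟨z, by simpa [hf] using hz⟩
end

section
/- Let G be a connected oriented graph with reduced incidence matrix B ∈ ℝ^{m×n}, and fix β ∈ ℝ^m. Suppose (θ, k) and (θ', k') both satisfy B θ = β + 2π k and B θ' = β + 2π k' with k, k' ∈ ℤ^m. Then there exists α ∈ ℤ^n such that θ' = θ + 2π α and k' = k + B α. -/
lemma incB_mulVec (n m : ℕ) (src tgt : Fin m → Fin (n + 1)) (x : Fin n → ℝ) (e : Fin m) :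
    (incB n m src tgt).mulVec x e =
      Fin.cases 0 x (src e) - Fin.cases 0 x (tgt e) := by
  have h1 : ∀ v : Fin (n+1),
      (∑ i, (if v = i.succ then (1:ℝ) else 0) * x i) = Fin.cases 0 x v := by
    intro v
    induction v using Fin.cases with
    | zero => simp [(Fin.succ_ne_zero _).symm]
    | succ j =>
      rw [Fintype.sum_eq_single j]
      · simp
      · intro i hi
        simp [Fin.succ_inj, Ne.symm hi]
  simp only [Matrix.mulVec, dotProduct, incB, sub_mul,
    Finset.sum_sub_distrib, h1]

/-- Any two solutions `(θ,k)`, `(θ',k')` of `Bθ = β + 2πk` differ by an integer shift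
`θ' = θ + 2πα`, `k' = k + Bα` for some `α ∈ ℤ^n`. -/
theorem stmt_8 (n m : ℕ) (src tgt : Fin m → Fin (n + 1))
    (hconn : GraphConnected n m src tgt)
    (β : Fin m → ℝ) (k k' : Fin m → ℤ) (θ θ' : Fin n → ℝ)
    (hθ : ∀ e, (incB n m src tgt).mulVec θ e = β e + 2 * Real.pi * k e)
    (hθ' : ∀ e, (incB n m src tgt).mulVec θ' e = β e + 2 * Real.pi * k' e) :
    ∃ α : Fin n → ℤ,
      (∀ i, θ' i = θ i + 2 * Real.pi * α i) ∧
      (∀ e, (k' e : ℝ) = (k e : ℝ) +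
        (incB n m src tgt).mulVec (fun i => (α i : ℝ)) e) := by
  set d : Fin n → ℝ := fun i => θ' i - θ i with hd
  set f : Fin (n+1) → ℝ := Fin.cases 0 d with hf
  have hedge : ∀ e, f (src e) - f (tgt e) = 2 * Real.pi * ((k' e : ℝ) - k e) := by
    intro e
    have hk := incB_mulVec n m src tgt d e
    have hsub : (incB n m src tgt).mulVec d e =
        (incB n m src tgt).mulVec θ' e - (incB n m src tgt).mulVec θ e := by
      simp [Matrix.mulVec, dotProduct, hd, mul_sub, Finset.sum_sub_distrib]
    rw [hsub, hθ, hθ'] at hk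
    rw [hf, ← hk]; ring
  have hall : ∀ v : Fin (n+1), ∃ c : ℤ, f v = 2 * Real.pi * c := by
    intro v
    induction hconn 0 v with
    | refl => exact ⟨0, by simp [hf]⟩
    | tail hab hbc ih =>
      obtain ⟨c, hc⟩ := ih
      obtain ⟨e, he⟩ := hbc
      rcases he with ⟨hs, ht⟩ | ⟨hs, ht⟩
      · refine ⟨c - (k' e - k e), ?_⟩
        have h := hedge e
        rw [hs, ht, hc] at h
        push_cast
        linarith
      · refine ⟨c + (k' e - k e), ?_⟩
        have h := hedge e
        rw [hs, ht, hc] at h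
        push_cast
        linarith
  obtain ⟨α, hα⟩ := Classical.axiomOfChoice (fun i : Fin n => hall i.succ)
  have hα' : ∀ i, θ' i - θ i = 2 * Real.pi * α i := by
    intro i
    have := hα i
    simpa [hf, hd] using this
  refine ⟨α, fun i => by linarith [hα' i], fun e => ?_⟩
  have hkey := incB_mulVec n m src tgt (fun i => (α i : ℝ)) e
  have hmul : ∀ v : Fin (n+1),
      2 * Real.pi * Fin.cases 0 (fun i => (α i : ℝ)) v = f v := by
    intro v
    induction v using Fin.cases with
    | zero => simp [hf]
    | succ j => simpa [hf, hd] using (hα' j).symm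
  have h := hedge e
  rw [← hmul (src e), ← hmul (tgt e)] at h
  have hpi : (2 * Real.pi) ≠ 0 := by positivity
  have h2 : Fin.cases 0 (fun i => (α i : ℝ)) (src e) -
      Fin.cases 0 (fun i => (α i : ℝ)) (tgt e) = (k' e : ℝ) - k e := by
    apply mul_left_cancel₀ hpi
    rw [mul_sub]; linarith
  rw [hkey, h2]; ring
end

section
/- Let G be a connected oriented graph with reduced incidence matrix B = [B_T; B_⊥] for a spanning tree T, and β = (β_T, β_⊥) ∈ ℝ^m. There exists θ ∈ ℝ^n and k ∈ ℤ^m with B θ = β + 2π k if and only if B_⊥ B_T^{-1} β_T ≡ β_⊥ (mod 2π). Moreover, when this holds, θ := B_T^{-1} β_T is such a solution. -/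
open scoped Classical

/-- Tree incidence submatrix (tree edges oriented away from the root `0`; edge `e : Fin n`
goes from `parent (e+1)` to `e+1`). -/
def treeB (n : ℕ) (parent : Fin (n + 1) → Fin (n + 1)) : Matrix (Fin n) (Fin n) ℝ :=
  fun e i => (if parent e.succ = i.succ then 1 else 0) - (if e = i then 1 else 0)

/-- Incidence rows for the non-tree edges `f : Fin mx` going from `esrc f` to `etgt f`. -/
def chordB (n mx : ℕ) (esrc etgt : Fin mx → Fin (n + 1)) : Matrix (Fin mx) (Fin n) ℝ :=
  fun f i => (if esrc f = i.succ then 1 else 0) - (if etgt f = i.succ then 1 else 0)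

/-- Edge `e` lies on the unique tree path from the root `0` to vertex `j`. -/
def onPath (n : ℕ) (parent : Fin (n + 1) → Fin (n + 1)) (j : Fin (n + 1)) (e : Fin n) :
    Prop :=
  ∃ k : ℕ, parent^[k] j = e.succ

noncomputable def Minv (n : ℕ) (parent : Fin (n + 1) → Fin (n + 1)) :
    Matrix (Fin n) (Fin n) ℝ :=
  fun i e => if onPath n parent i.succ e then -1 else 0

lemma iter_zero_of_cycle {n : ℕ} {parent : Fin (n + 1) → Fin (n + 1)}
    (hroot : parent 0 = 0) (hacyc : ∀ i, ∃ k : ℕ, parent^[k] i = 0)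
    (j : Fin (n + 1)) (a c : ℕ) (hc : 0 < c)
    (h : parent^[a + c] j = parent^[a] j) : parent^[a] j = 0 := by
  set w := parent^[a] j with hw
  have hcyc : parent^[c] w = w := by
    rw [hw, ← Function.iterate_add_apply, Nat.add_comm c a, h]
  have hmul : ∀ k, parent^[c * k] w = w := by
    intro k
    induction k with
    | zero => simp
    | succ k ih =>
        rw [Nat.mul_succ, Function.iterate_add_apply, hcyc, ih]
  obtain ⟨m, hm⟩ := hacyc w
  have key : parent^[c * (m + 1)] w = 0 := by
    have hge : c * (m + 1) = (c * (m + 1) - m) + m := by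
      have : m ≤ c * (m + 1) := by nlinarith
      omega
    rw [hge, Function.iterate_add_apply, hm, Function.iterate_fixed hroot]
  rw [hmul (m + 1)] at key
  exact key

lemma iter_inj {n : ℕ} {parent : Fin (n + 1) → Fin (n + 1)}
    (hroot : parent 0 = 0) (hacyc : ∀ i, ∃ k : ℕ, parent^[k] i = 0)
    (j : Fin (n + 1)) (a b : ℕ)
    (hne : parent^[a] j ≠ 0) (h : parent^[b] j = parent^[a] j) : a = b := by
  rcases lt_trichotomy a b with hab | hab | hab
  · exfalso
    apply hne
    have : parent^[a + (b - a)] j = parent^[a] j := by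
      have : a + (b - a) = b := by omega
      rw [this, h]
    exact iter_zero_of_cycle hroot hacyc j a (b - a) (by omega) this
  · exact hab
  · exfalso
    apply hne
    have h0 : parent^[b + (a - b)] j = parent^[b] j := by
      have : b + (a - b) = a := by omega
      rw [this, ← h]
    have hb0 : parent^[b] j = 0 :=
      iter_zero_of_cycle hroot hacyc j b (a - b) (by omega) h0
    have : a = (a - b) + b := by omega
    rw [this, Function.iterate_add_apply, hb0, Function.iterate_fixed hroot]

lemma Minv_mul_treeB {n : ℕ} {parent : Fin (n + 1) → Fin (n + 1)}
    (hroot : parent 0 = 0) (hacyc : ∀ i, ∃ k : ℕ, parent^[k] i = 0) :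
    Minv n parent * treeB n parent = 1 := by
  ext i j
  rw [Matrix.mul_apply]
  have hterm : ∀ e : Fin n,
      Minv n parent i e * treeB n parent e j
      = (if e = j ∧ onPath n parent i.succ e then (1:ℝ) else 0)
        - (if onPath n parent i.succ e ∧ parent e.succ = j.succ then (1:ℝ) else 0) := by
    intro e
    simp only [Minv, treeB]
    rcases eq_or_ne e j with h3 | h3
    · subst h3
      by_cases h1 : onPath n parent i.succ e <;>
        by_cases h2 : parent e.succ = e.succ <;>
        simp [h1, h2] <;> ring
    · by_cases h1 : onPath n parent i.succ e <;>
        by_cases h2 : parent e.succ = j.succ <;>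
        simp [h1, h2, h3] <;> ring
  rw [Finset.sum_congr rfl (fun e _ => hterm e), Finset.sum_sub_distrib]
  have hS1 : (∑ e : Fin n, if e = j ∧ onPath n parent i.succ e then (1:ℝ) else 0)
      = if onPath n parent i.succ j then (1:ℝ) else 0 := by
    rw [Finset.sum_eq_single j]
    · simp
    · intro e _ he
      simp [he]
    · simp
  rw [hS1]
  by_cases hij : i = j
  · subst hij
    have hop : onPath n parent i.succ i := ⟨0, rfl⟩
    have hS2 : (∑ e : Fin n,
        if onPath n parent i.succ e ∧ parent e.succ = i.succ then (1:ℝ) else 0) = 0 := by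
      apply Finset.sum_eq_zero
      intro e _
      rw [if_neg]
      rintro ⟨⟨k, hk⟩, hp⟩
      have hkk : parent^[k + 1] i.succ = parent^[0] i.succ := by
        rw [Function.iterate_succ_apply', hk, hp]; rfl
      have h0 := iter_inj hroot hacyc i.succ 0 (k + 1) (Fin.succ_ne_zero i) hkk
      omega
    rw [hS2, if_pos hop]
    simp [Matrix.one_apply]
  · by_cases hop : onPath n parent i.succ j
    · obtain ⟨t, ht⟩ := hop
      cases t with
      | zero => exact absurd (Fin.succ_injective _ ht) hij
      | succ s =>
        have hw : parent (parent^[s] i.succ) = j.succ := by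
          have := ht
          rwa [Function.iterate_succ_apply'] at this
        have hwne : parent^[s] i.succ ≠ 0 := by
          intro h0
          rw [h0, hroot] at hw
          exact (Fin.succ_ne_zero j) hw.symm
        obtain ⟨e0, he0⟩ : ∃ e0 : Fin n, e0.succ = parent^[s] i.succ :=
          ⟨(parent^[s] i.succ).pred hwne, Fin.succ_pred _ hwne⟩
        have hS2 : (∑ e : Fin n,
            if onPath n parent i.succ e ∧ parent e.succ = j.succ then (1:ℝ) else 0) = 1 := by
          rw [Finset.sum_eq_single e0]
          · rw [if_pos ⟨⟨s, he0.symm⟩, by rw [he0, hw]⟩]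
          · intro e _ he
            rw [if_neg]
            rintro ⟨⟨k, hk⟩, hp⟩
            have hkk : parent^[k + 1] i.succ = parent^[s + 1] i.succ := by
              rw [Function.iterate_succ_apply', Function.iterate_succ_apply', hk, hp, hw]
            have hne1 : parent^[s + 1] i.succ ≠ 0 := by
              rw [Function.iterate_succ_apply', hw]
              exact Fin.succ_ne_zero j
            have := iter_inj hroot hacyc i.succ (s + 1) (k + 1) hne1 hkk
            have hks : k = s := by omega
            apply he
            apply Fin.succ_injective
            rw [← hk, he0, hks]
          · simp
        rw [hS2, if_pos ⟨s + 1, ht⟩]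
        simp [Matrix.one_apply, hij]
    · have hS2 : (∑ e : Fin n,
          if onPath n parent i.succ e ∧ parent e.succ = j.succ then (1:ℝ) else 0) = 0 := by
        apply Finset.sum_eq_zero
        intro e _
        rw [if_neg]
        rintro ⟨⟨k, hk⟩, hp⟩
        exact hop ⟨k + 1, by rw [Function.iterate_succ_apply', hk, hp]⟩
      rw [hS2, if_neg hop]
      simp [Matrix.one_apply, hij]

noncomputable def ZR : Subring ℝ := (Int.castRingHom ℝ).range

lemma ite01_mem (P : Prop) [Decidable P] : (if P then (1:ℝ) else 0) ∈ ZR := by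
  split_ifs
  · exact ⟨1, by simp⟩
  · exact ⟨0, by simp⟩

lemma Minv_mem {n : ℕ} (parent : Fin (n + 1) → Fin (n + 1)) (i e : Fin n) :
    Minv n parent i e ∈ ZR := by
  simp only [Minv]
  split_ifs
  · exact ⟨-1, by simp⟩
  · exact ⟨0, by simp⟩

lemma chordB_mem {n mx : ℕ} (esrc etgt : Fin mx → Fin (n + 1)) (f : Fin mx) (e : Fin n) :
    chordB n mx esrc etgt f e ∈ ZR :=
  sub_mem (ite01_mem _) (ite01_mem _)

lemma mem_ZR_iff (x : ℝ) : x ∈ ZR ↔ ∃ z : ℤ, (z : ℝ) = x := Iff.rfl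

/-- Solvability of the angle equation: there exist `θ ∈ ℝ^n` and integer vectors
`k_T ∈ ℤ^n, k_⊥ ∈ ℤ^{m−n}` with `B_T θ = β_T + 2π k_T` and `B_⊥ θ = β_⊥ + 2π k_⊥`
iff `B_⊥ B_T⁻¹ β_T ≡ β_⊥ (mod 2π)`; moreover `θ := B_T⁻¹ β_T` is then a solution. -/
theorem stmt_11 (n mx : ℕ) (parent : Fin (n + 1) → Fin (n + 1))
    (hroot : parent 0 = 0) (hacyc : ∀ i, ∃ k : ℕ, parent^[k] i = 0)
    (esrc etgt : Fin mx → Fin (n + 1)) (βT : Fin n → ℝ) (βP : Fin mx → ℝ) :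
    ((∃ (θ : Fin n → ℝ) (kT : Fin n → ℤ) (kP : Fin mx → ℤ),
        (∀ e, (treeB n parent).mulVec θ e = βT e + 2 * Real.pi * kT e) ∧
        (∀ f, (chordB n mx esrc etgt).mulVec θ f = βP f + 2 * Real.pi * kP f)) ↔
      (∀ f, ∃ z : ℤ,
        (chordB n mx esrc etgt * (treeB n parent)⁻¹).mulVec βT f - βP f =
          2 * Real.pi * z)) ∧
    ((∀ f, ∃ z : ℤ,
        (chordB n mx esrc etgt * (treeB n parent)⁻¹).mulVec βT f - βP f =
          2 * Real.pi * z) →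
      ∃ (kT : Fin n → ℤ) (kP : Fin mx → ℤ),
        (∀ e, (treeB n parent).mulVec ((treeB n parent)⁻¹.mulVec βT) e =
          βT e + 2 * Real.pi * kT e) ∧
        (∀ f, (chordB n mx esrc etgt).mulVec ((treeB n parent)⁻¹.mulVec βT) f =
          βP f + 2 * Real.pi * kP f)) := by
  have hMB : Minv n parent * treeB n parent = 1 := Minv_mul_treeB hroot hacyc
  have hinv : (treeB n parent)⁻¹ = Minv n parent := Matrix.inv_eq_left_inv hMB
  have hBM : treeB n parent * (treeB n parent)⁻¹ = 1 := by
    rw [hinv, mul_eq_one_comm.mpr hMB]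
  have hMB' : (treeB n parent)⁻¹ * treeB n parent = 1 := by rw [hinv]; exact hMB
  have hMinv_mem : ∀ i e, (treeB n parent)⁻¹ i e ∈ ZR := by
    rw [hinv]; exact Minv_mem parent
  have part2 : (∀ f, ∃ z : ℤ,
      (chordB n mx esrc etgt * (treeB n parent)⁻¹).mulVec βT f - βP f =
        2 * Real.pi * z) →
      ∃ (kT : Fin n → ℤ) (kP : Fin mx → ℤ),
        (∀ e, (treeB n parent).mulVec ((treeB n parent)⁻¹.mulVec βT) e =
          βT e + 2 * Real.pi * kT e) ∧
        (∀ f, (chordB n mx esrc etgt).mulVec ((treeB n parent)⁻¹.mulVec βT) f =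
          βP f + 2 * Real.pi * kP f) := by
    intro h
    choose z hz using h
    refine ⟨0, z, ?_, ?_⟩
    · intro e
      have heq : (treeB n parent).mulVec ((treeB n parent)⁻¹.mulVec βT) = βT := by
        rw [Matrix.mulVec_mulVec, hBM, Matrix.one_mulVec]
      rw [heq]
      simp
    · intro f
      rw [Matrix.mulVec_mulVec]
      linarith [hz f]
  refine ⟨⟨?_, fun h => ⟨(treeB n parent)⁻¹.mulVec βT, part2 h⟩⟩, part2⟩
  rintro ⟨θ, kT, kP, h1, h2⟩ f
  set κ : Fin n → ℝ := fun e => (kT e : ℝ) with hκ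
  have hβT : βT = (treeB n parent).mulVec θ - (2 * Real.pi) • κ := by
    funext e
    simp only [Pi.sub_apply, Pi.smul_apply, smul_eq_mul, hκ]
    linarith [h1 e]
  have hstep : (treeB n parent)⁻¹.mulVec βT
      = θ - (2 * Real.pi) • (treeB n parent)⁻¹.mulVec κ := by
    rw [hβT, Matrix.mulVec_sub, Matrix.mulVec_smul, Matrix.mulVec_mulVec, hMB',
      Matrix.one_mulVec]
  have hCMf : (chordB n mx esrc etgt * (treeB n parent)⁻¹).mulVec βT f
      = βP f + 2 * Real.pi * kP f
        - 2 * Real.pi * ((chordB n mx esrc etgt * (treeB n parent)⁻¹).mulVec κ f) := by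
    rw [← Matrix.mulVec_mulVec, hstep, Matrix.mulVec_sub, Matrix.mulVec_smul,
      Matrix.mulVec_mulVec]
    simp only [Pi.sub_apply, Pi.smul_apply, smul_eq_mul, Matrix.mulVec_mulVec]
    linarith [h2 f]
  have hint : (chordB n mx esrc etgt * (treeB n parent)⁻¹).mulVec κ f ∈ ZR := by
    rw [Matrix.mulVec, dotProduct]
    apply Subring.sum_mem
    intro e _
    apply mul_mem
    · rw [Matrix.mul_apply]
      apply Subring.sum_mem
      intro x _
      exact mul_mem (chordB_mem esrc etgt f x) (hMinv_mem x e)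
    · exact ⟨kT e, rfl⟩
  obtain ⟨w, hw⟩ := hint
  have hw' : (w : ℝ) = (chordB n mx esrc etgt * (treeB n parent)⁻¹).mulVec κ f := hw
  refine ⟨kP f - w, ?_⟩
  rw [hCMf, ← hw']
  push_cast
  ring
end

section
/- Let G be a connected oriented graph and β ∈ ℝ^m. If θ, θ' ∈ (−π, π]^n both satisfy B θ ≡ β (mod 2π) and B θ' ≡ β (mod 2π) componentwise, then θ = θ'. -/
/-- Uniqueness in `(−π, π]^n`: if `θ, θ'` both lie componentwise in `(−π, π]` and both
satisfy `Bθ ≡ β (mod 2π)` componentwise, then `θ = θ'`. -/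
theorem stmt_16 (n m : ℕ) (src tgt : Fin m → Fin (n + 1))
    (hconn : GraphConnected n m src tgt)
    (β : Fin m → ℝ) (θ θ' : Fin n → ℝ)
    (hθr : ∀ i, θ i ∈ Set.Ioc (-Real.pi) Real.pi)
    (hθ'r : ∀ i, θ' i ∈ Set.Ioc (-Real.pi) Real.pi)
    (hθ : ∀ e, ∃ z : ℤ, (incB n m src tgt).mulVec θ e = β e + 2 * Real.pi * z)
    (hθ' : ∀ e, ∃ z : ℤ, (incB n m src tgt).mulVec θ' e = β e + 2 * Real.pi * z) :
    θ = θ' := by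
  classical
  set ext : (Fin n → ℝ) → Fin (n + 1) → ℝ := fun ψ => Fin.cases 0 ψ with hextdef
  have hsum : ∀ (ψ : Fin n → ℝ) (v : Fin (n + 1)),
      (∑ i, (if v = i.succ then (1 : ℝ) else 0) * ψ i) = ext ψ v := by
    intro ψ v
    induction v using Fin.cases with
    | zero =>
      simp [ext, (Fin.succ_ne_zero _).symm]
    | succ j =>
      simp only [ext, Fin.cases_succ]
      rw [Finset.sum_eq_single j]
      · simp
      · intro i _ hij
        have : ¬ (Fin.succ j = Fin.succ i) := by
          simp [Fin.succ_inj]; exact fun h => hij h.symm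
        simp [this]
      · simp
  have hmul : ∀ (ψ : Fin n → ℝ) (e : Fin m),
      (incB n m src tgt).mulVec ψ e = ext ψ (src e) - ext ψ (tgt e) := by
    intro ψ e
    simp only [Matrix.mulVec, dotProduct, incB, sub_mul]
    rw [Finset.sum_sub_distrib, hsum, hsum]
  set g : Fin (n + 1) → ℝ := fun v => ext θ v - ext θ' v with hgdef
  have hedge : ∀ e : Fin m, ∃ z : ℤ, g (src e) - g (tgt e) = 2 * Real.pi * z := by
    intro e
    obtain ⟨z, hz⟩ := hθ e
    obtain ⟨z', hz'⟩ := hθ' e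
    refine ⟨z - z', ?_⟩
    have h1 := hmul θ e
    have h2 := hmul θ' e
    have : (ext θ (src e) - ext θ (tgt e)) - (ext θ' (src e) - ext θ' (tgt e))
        = 2 * Real.pi * z - 2 * Real.pi * z' := by
      rw [← h1, ← h2, hz, hz']; ring
    simp only [g]
    push_cast
    linarith [this]
  have hstep : ∀ u v : Fin (n + 1),
      (∃ e, (src e = u ∧ tgt e = v) ∨ (src e = v ∧ tgt e = u)) →
      ∃ z : ℤ, g u - g v = 2 * Real.pi * z := by
    rintro u v ⟨e, (⟨h1, h2⟩ | ⟨h1, h2⟩)⟩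
    · obtain ⟨z, hz⟩ := hedge e
      exact ⟨z, by rw [← h1, ← h2]; exact hz⟩
    · obtain ⟨z, hz⟩ := hedge e
      refine ⟨-z, ?_⟩
      rw [← h1, ← h2] at *
      push_cast
      linarith [hz]
  have hpath : ∀ a b : Fin (n + 1),
      ∃ z : ℤ, g a - g b = 2 * Real.pi * z := by
    intro a b
    induction hconn a b with
    | refl => exact ⟨0, by simp⟩
    | tail hab hbc ih =>
      obtain ⟨z1, hz1⟩ := ih
      obtain ⟨z2, hz2⟩ := hstep _ _ hbc
      refine ⟨z1 + z2, ?_⟩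
      push_cast
      linarith [hz1, hz2]
  funext i
  obtain ⟨z, hz⟩ := hpath (Fin.succ i) 0
  have hg0 : g 0 = 0 := by simp [g, ext]
  have hgi : g (Fin.succ i) = θ i - θ' i := by simp [g, ext]
  rw [hg0, hgi, sub_zero] at hz
  have hpi := Real.pi_pos
  have h1 := hθr i
  have h2 := hθ'r i
  simp only [Set.mem_Ioc] at h1 h2
  have hz0 : z = 0 := by
    by_contra hne
    have : (1 : ℝ) ≤ |(z : ℝ)| := by
      have : (1 : ℤ) ≤ |z| := Int.one_le_abs hne
      calc (1 : ℝ) ≤ (|z| : ℤ) := by exact_mod_cast this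
        _ = |(z : ℝ)| := by push_cast; ring
    have habs : |θ i - θ' i| < 2 * Real.pi := by
      rw [abs_lt]; constructor <;> linarith
    rw [hz, abs_mul] at habs
    have : 2 * Real.pi * 1 ≤ |2 * Real.pi| * |(z : ℝ)| := by
      rw [abs_of_pos (by linarith)]
      nlinarith
    linarith
  rw [hz0] at hz
  simp at hz
  linarith
end

section
/- Let T be a spanning tree of G with invertible tree submatrix B_T of the reduced incidence matrix B = [B_T; B_⊥]. For each non-tree edge e = (i,j), (B_⊥ B_T^{-1} β_T)_e equals the sum of β over edges of the tree path from 0 to j minus the sum of β over edges of the tree path from 0 to i, i.e. the signed sum of β along the tree path from i to j. -/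
open scoped Classical

noncomputable def Ninv (n : ℕ) (parent : Fin (n + 1) → Fin (n + 1)) :
    Matrix (Fin n) (Fin n) ℝ :=
  fun i e => -(if onPath n parent i.succ e then 1 else 0)

section lemmas
variable {n : ℕ} {parent : Fin (n + 1) → Fin (n + 1)}

lemma iter_zero (hroot : parent 0 = 0) : ∀ k, parent^[k] (0 : Fin (n+1)) = 0 := by
  intro k
  induction k with
  | zero => rfl
  | succ m ih => rw [Function.iterate_succ_apply, hroot]; exact ih

lemma onPath_zero (hroot : parent 0 = 0) (e : Fin n) : ¬ onPath n parent 0 e := by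
  rintro ⟨k, hk⟩
  rw [iter_zero hroot] at hk
  exact Fin.succ_ne_zero e hk.symm

lemma onPath_succ_iff (i e : Fin n) :
    onPath n parent i.succ e ↔ e = i ∨ onPath n parent (parent i.succ) e := by
  constructor
  · rintro ⟨k, hk⟩
    cases k with
    | zero => exact Or.inl (Fin.succ_injective _ hk.symm)
    | succ m =>
      right
      exact ⟨m, by rwa [Function.iterate_succ_apply] at hk⟩
  · rintro (rfl | ⟨k, hk⟩)
    · exact ⟨0, rfl⟩
    · exact ⟨k + 1, by rwa [Function.iterate_succ_apply]⟩

lemma no_cycle (hroot : parent 0 = 0) (hacyc : ∀ i, ∃ k : ℕ, parent^[k] i = 0)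
    (i : Fin n) : ¬ onPath n parent (parent i.succ) i := by
  rintro ⟨k, hk⟩
  have hper : parent^[k + 1] i.succ = i.succ := by
    rw [Function.iterate_succ_apply]; exact hk
  have hperiod : ∀ j : ℕ, parent^[j * (k + 1)] i.succ = i.succ := by
    intro j
    induction j with
    | zero => simp
    | succ m ih =>
      rw [Nat.succ_mul, Function.iterate_add_apply, hper, ih]
  obtain ⟨m, hm⟩ := hacyc i.succ
  have hzero : ∀ t, parent^[t + m] i.succ = 0 := by
    intro t
    rw [Function.iterate_add_apply, hm, iter_zero hroot]
  have hge : m ≤ m * (k + 1) := Nat.le_mul_of_pos_right m (Nat.succ_pos k)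
  have : parent^[m * (k + 1)] i.succ = 0 := by
    have := hzero (m * (k + 1) - m)
    rwa [Nat.sub_add_cancel hge] at this
  rw [hperiod m] at this
  exact Fin.succ_ne_zero i this

lemma sum_indicator (hroot : parent 0 = 0) (v : Fin (n + 1)) (e : Fin n) :
    ∑ i : Fin n, (if v = i.succ then (1:ℝ) else 0) *
      (if onPath n parent i.succ e then (1:ℝ) else 0) =
    if onPath n parent v e then 1 else 0 := by
  induction v using Fin.cases with
  | zero =>
    rw [if_neg (onPath_zero hroot e)]
    refine Finset.sum_eq_zero fun i _ => ?_
    rw [if_neg (Fin.succ_ne_zero i).symm, zero_mul]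
  | succ j =>
    rw [Finset.sum_eq_single j]
    · simp
    · intro b _ hb
      rw [if_neg (fun h => hb (Fin.succ_injective _ h.symm)), zero_mul]
    · simp

lemma treeB_mul_Ninv (hroot : parent 0 = 0)
    (hacyc : ∀ i, ∃ k : ℕ, parent^[k] i = 0) :
    treeB n parent * Ninv n parent = 1 := by
  ext e e'
  rw [Matrix.mul_apply]
  simp only [treeB, Ninv]
  have hterm : ∀ i : Fin n,
      ((if parent e.succ = i.succ then (1:ℝ) else 0) - (if e = i then 1 else 0)) *
        (-(if onPath n parent i.succ e' then (1:ℝ) else 0)) =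
      (if e = i then (1:ℝ) else 0) * (if onPath n parent i.succ e' then 1 else 0) -
        (if parent e.succ = i.succ then (1:ℝ) else 0) *
          (if onPath n parent i.succ e' then 1 else 0) := fun i => by ring
  rw [Finset.sum_congr rfl fun i _ => hterm i, Finset.sum_sub_distrib,
    sum_indicator hroot]
  have h2 : ∑ i : Fin n, (if e = i then (1:ℝ) else 0) *
      (if onPath n parent i.succ e' then (1:ℝ) else 0)
      = if onPath n parent e.succ e' then 1 else 0 := by
    rw [Finset.sum_eq_single e]
    · simp
    · intro b _ hb; rw [if_neg (fun h => hb h.symm), zero_mul]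
    · simp
  rw [h2, Matrix.one_apply]
  by_cases hp : onPath n parent (parent e.succ) e'
  · have hne : e ≠ e' := by
      rintro rfl
      exact no_cycle hroot hacyc e hp
    rw [if_pos ((onPath_succ_iff e e').2 (Or.inr hp)), if_pos hp, if_neg hne]
    ring
  · by_cases he : e' = e
    · subst he
      rw [if_pos ((onPath_succ_iff _ _).2 (Or.inl rfl)), if_neg hp, if_pos rfl]
      ring
    · rw [if_neg, if_neg hp, if_neg (fun h => he h.symm)]
      · ring
      · intro h
        rcases (onPath_succ_iff e e').1 h with h | h
        · exact he h
        · exact hp h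

end lemmas

/-- For each non-tree edge `f = (i,j)`, `(B_⊥ B_T⁻¹ β_T)_f` equals the sum of `β_T` over
the tree path from `0` to `j` minus the sum over the tree path from `0` to `i`. -/
theorem stmt_18 (n mx : ℕ) (parent : Fin (n + 1) → Fin (n + 1))
    (hroot : parent 0 = 0) (hacyc : ∀ i, ∃ k : ℕ, parent^[k] i = 0)
    (esrc etgt : Fin mx → Fin (n + 1)) (βT : Fin n → ℝ) (f : Fin mx) :
    (chordB n mx esrc etgt * (treeB n parent)⁻¹).mulVec βT f =
      (∑ e ∈ Finset.univ.filter (onPath n parent (etgt f)), βT e) -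
        ∑ e ∈ Finset.univ.filter (onPath n parent (esrc f)), βT e := by
  rw [Matrix.inv_eq_right_inv (treeB_mul_Ninv hroot hacyc)]
  have hentry : ∀ e : Fin n, (chordB n mx esrc etgt * Ninv n parent) f e =
      (if onPath n parent (etgt f) e then (1:ℝ) else 0) -
        (if onPath n parent (esrc f) e then 1 else 0) := by
    intro e
    rw [Matrix.mul_apply]
    simp only [chordB, Ninv]
    have hterm : ∀ i : Fin n,
        ((if esrc f = i.succ then (1:ℝ) else 0) - (if etgt f = i.succ then 1 else 0)) *
          (-(if onPath n parent i.succ e then (1:ℝ) else 0)) =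
        (if etgt f = i.succ then (1:ℝ) else 0) * (if onPath n parent i.succ e then 1 else 0)
          - (if esrc f = i.succ then (1:ℝ) else 0) *
            (if onPath n parent i.succ e then 1 else 0) := fun i => by ring
    rw [Finset.sum_congr rfl fun i _ => hterm i, Finset.sum_sub_distrib,
      sum_indicator hroot, sum_indicator hroot]
  simp only [Matrix.mulVec, dotProduct]
  rw [Finset.sum_congr rfl fun e _ => by rw [hentry e]]
  simp only [sub_mul, one_mul, zero_mul, ite_mul]
  rw [Finset.sum_sub_distrib, Finset.sum_filter, Finset.sum_filter]
end
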